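/- arXiv:1102.0373 — 2 statements merged into one kernel-verified Lean document; each statement's English description precedes it below -/
import Mathlib

section
/- Let p ≥ 3 be a real number, k_p := ⌊(p+1)/2⌋, let X, Y ≥ 0 and θ ∈ (0,π), and set E := X cos²(θ/2) + Y sin²(θ/2) and Ē := X sin²(θ/2) + Y cos²(θ/2). Then (1/sin²θ)·( E^p + Ē^p − X^p − Y^p ) ≤ −(1/2)(X^p + Y^p) + (1/2) Σ_{k=1}^{k_p} C(p,k) ( X^k Y^{p−k} + X^{p−k} Y^k ). -/
open Real Finset

/-- The generalized binomial coefficient `C(p,k) = p(p-1)⋯(p-k+1)/k!` for real `p`,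
with `C(p,0) = 1`. -/
noncomputable def genBinom (p : ℝ) (k : ℕ) : ℝ :=
  (∏ i ∈ Finset.range k, (p - i)) / (Nat.factorial k)

lemma genBinom_zero (p : ℝ) : genBinom p 0 = 1 := by simp [genBinom]

lemma genBinom_succ (p : ℝ) (k : ℕ) :
    genBinom p (k + 1) = genBinom p k * ((p - k) / (k + 1)) := by
  unfold genBinom
  rw [Finset.prod_range_succ, Nat.factorial_succ]
  have h1 : ((k.factorial : ℝ)) ≠ 0 := by exact_mod_cast k.factorial_ne_zero
  have h2 : ((k : ℝ) + 1) ≠ 0 := by positivity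
  push_cast
  field_simp

lemma genBinom_one (p : ℝ) : genBinom p 1 = p := by
  rw [show (1 : ℕ) = 0 + 1 from rfl, genBinom_succ, genBinom_zero]; simp

lemma genBinom_nonneg {p : ℝ} {k : ℕ} (h : (k : ℝ) ≤ p + 1) : 0 ≤ genBinom p k := by
  unfold genBinom
  apply div_nonneg _ (by positivity)
  apply Finset.prod_nonneg
  intro i hi
  rw [Finset.mem_range] at hi
  have : (i : ℝ) + 1 ≤ (k : ℝ) := by exact_mod_cast hi
  linarith

lemma genBinom_deriv (p : ℝ) (k : ℕ) :
    ((k : ℝ) + 1) * genBinom p (k + 1) = p * genBinom (p - 1) k := by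
  unfold genBinom
  rw [Finset.prod_range_succ', Nat.factorial_succ]
  have h3 : ∏ i ∈ Finset.range k, (p - ((i : ℕ) + 1 : ℕ)) = ∏ i ∈ Finset.range k, (p - 1 - i) := by
    apply Finset.prod_congr rfl; intro i _; push_cast; ring
  have h1 : ((k.factorial : ℝ)) ≠ 0 := by exact_mod_cast k.factorial_ne_zero
  have h2 : ((k : ℝ) + 1) ≠ 0 := by positivity
  push_cast at h3 ⊢
  rw [h3]
  field_simp
  ring

lemma bernoulli_base {p x : ℝ} (hp0 : 0 ≤ p) (hp1 : p ≤ 1) (hx : 0 ≤ x) :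
    (1 + x) ^ p ≤ 1 + p * x := by
  have h := Real.geom_mean_le_arith_mean2_weighted (by linarith : (0:ℝ) ≤ 1 - p) hp0
    zero_le_one (by linarith : (0:ℝ) ≤ 1 + x) (by ring)
  rw [Real.one_rpow] at h
  calc (1 + x) ^ p = 1 * (1 + x) ^ p := (one_mul _).symm
    _ ≤ (1 - p) * 1 + p * (1 + x) := h
    _ = 1 + p * x := by ring

lemma taylor_bound : ∀ n : ℕ, ∀ p : ℝ, (n : ℝ) ≤ p → p ≤ (n : ℝ) + 1 →
    ∀ x : ℝ, 0 ≤ x → x ≤ 1 →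
    (1 + x) ^ p ≤ ∑ k ∈ Finset.range (n + 2), genBinom p k * x ^ k := by
  intro n
  induction n with
  | zero =>
    intro p h0 h1 x hx0 hx1
    have : ∑ k ∈ Finset.range 2, genBinom p k * x ^ k = 1 + p * x := by
      rw [Finset.sum_range_succ, Finset.sum_range_one, genBinom_zero, genBinom_one]
      ring
    rw [this]
    exact bernoulli_base (by exact_mod_cast h0) (by push_cast at h1; linarith) hx0
  | succ n ih =>
    intro p hpl hpu x hx0 hx1
    push_cast at hpl hpu
    have hn0 : (0 : ℝ) ≤ (n : ℝ) := Nat.cast_nonneg n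
    have hp1 : (1 : ℝ) ≤ p := by linarith
    set F : ℝ → ℝ := fun y => (∑ k ∈ Finset.range (n + 3), genBinom p k * y ^ k) - (1 + y) ^ p
      with hF
    have hmono : MonotoneOn F (Set.Icc 0 1) := by
      apply monotoneOn_of_hasDerivWithinAt_nonneg (convex_Icc 0 1)
        (f' := fun y =>
          p * ((∑ k ∈ Finset.range (n + 2), genBinom (p - 1) k * y ^ k) - (1 + y) ^ (p - 1)))
      · apply ContinuousOn.sub
        · exact (continuous_finset_sum _ fun k _ => continuous_const.mul (continuous_pow k)).continuousOn
        · apply ContinuousOn.rpow_const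
          · exact (continuous_const.add continuous_id).continuousOn
          · intro y _; exact Or.inr (by linarith)
      · intro y hy
        rw [interior_Icc] at hy
        apply HasDerivAt.hasDerivWithinAt
        have h1 : HasDerivAt (fun y : ℝ => (1 + y) ^ p) (1 * p * (1 + y) ^ (p - 1)) y := by
          have hbase : HasDerivAt (fun y : ℝ => 1 + y) 1 y := (hasDerivAt_id y).const_add 1
          exact hbase.rpow_const (Or.inl (by nlinarith [hy.1]))
        have h2 : HasDerivAt (fun y : ℝ => ∑ k ∈ Finset.range (n + 3), genBinom p k * y ^ k)
            (∑ k ∈ Finset.range (n + 3), genBinom p k * ((k : ℝ) * y ^ (k - 1))) y := by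
          apply HasDerivAt.fun_sum
          intro k _
          exact (hasDerivAt_pow k y).const_mul _
        have h3 := h2.fun_sub h1
        convert h3 using 1
        have hsum : ∑ k ∈ Finset.range (n + 3), genBinom p k * ((k : ℝ) * y ^ (k - 1))
            = p * ∑ k ∈ Finset.range (n + 2), genBinom (p - 1) k * y ^ k := by
          rw [Finset.sum_range_succ']
          simp only [Nat.cast_zero, zero_mul, mul_zero, add_zero]
          rw [Finset.mul_sum]
          apply Finset.sum_congr rfl
          intro k _
          have : genBinom p (k + 1) * (((k : ℕ) + 1 : ℕ) * y ^ ((k + 1) - 1))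
              = (((k : ℝ) + 1) * genBinom p (k + 1)) * y ^ k := by
            push_cast; ring
          rw [this, genBinom_deriv]
          ring
        rw [mul_sub, ← hsum]
        ring
      · intro y hy
        rw [interior_Icc] at hy
        have hq := ih (p - 1) (by push_cast; linarith) (by push_cast; linarith) y
          (le_of_lt hy.1) (le_of_lt hy.2)
        have : 0 ≤ (∑ k ∈ Finset.range (n + 2), genBinom (p - 1) k * y ^ k) - (1 + y) ^ (p - 1) :=
          sub_nonneg.mpr hq
        positivity
    have h0 : F 0 = 0 := by
      rw [hF]
      simp only [add_zero, Real.one_rpow]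
      rw [Finset.sum_eq_single 0]
      · rw [genBinom_zero]; ring
      · intro k _ hk; rw [zero_pow hk]; ring
      · intro h; exact absurd (Finset.mem_range.mpr (by omega)) h
    have := hmono (Set.mem_Icc.mpr ⟨le_refl 0, zero_le_one⟩) (Set.mem_Icc.mpr ⟨hx0, hx1⟩) hx0
    rw [h0] at this
    show (1 + x) ^ p ≤ ∑ k ∈ Finset.range (n + 3), genBinom p k * x ^ k
    rw [hF] at this
    simp only [] at this
    linarith [this]

lemma genBinom_pairing (p : ℝ) (N : ℕ) (hp1 : (N : ℝ) ≤ p + 1) (hp2 : p ≤ N) :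
    ∀ m j k : ℕ, j + k = N → k = j + m → genBinom p k ≤ genBinom p j := by
  intro m
  induction m using Nat.strong_induction_on with
  | _ m ih =>
    match m with
    | 0 =>
      intro j k hjk hk
      rw [hk, Nat.add_zero]
    | 1 =>
      intro j k hjk hk
      subst hk
      have hNr : ((j : ℝ) + ((j : ℝ) + 1)) = N := by exact_mod_cast congrArg (Nat.cast : ℕ → ℝ) hjk
      have hCj : 0 ≤ genBinom p j := genBinom_nonneg (by linarith)
      rw [genBinom_succ]
      have hfrac : (p - j) / ((j : ℝ) + 1) ≤ 1 := by
        rw [div_le_one (by positivity)]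
        linarith
      calc genBinom p j * ((p - j) / ((j : ℝ) + 1)) ≤ genBinom p j * 1 :=
            mul_le_mul_of_nonneg_left hfrac hCj
        _ = genBinom p j := mul_one _
    | (m + 2) =>
      intro j k hjk hk
      have hIH : genBinom p (k - 1) ≤ genBinom p (j + 1) :=
        ih m (by omega) (j + 1) (k - 1) (by omega) (by omega)
      have hNr : ((j : ℝ) + (k : ℝ)) = N := by exact_mod_cast congrArg (Nat.cast : ℕ → ℝ) hjk
      have hjN : (j : ℝ) + 2 ≤ N := by
        have : j + 2 ≤ N := by omega
        exact_mod_cast this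
      have hkN : (k : ℝ) ≤ N := by
        have : k ≤ N := by omega
        exact_mod_cast this
      have hk1r : ((k - 1 : ℕ) : ℝ) = (k : ℝ) - 1 := by
        have h1 : (1 : ℕ) ≤ k := by omega
        push_cast [h1]
        ring
      have hk2r : (2 : ℝ) ≤ (k : ℝ) := by
        have : 2 ≤ k := by omega
        exact_mod_cast this
      have hCk1 : 0 ≤ genBinom p (k - 1) := genBinom_nonneg (by rw [hk1r]; linarith)
      have hCj : 0 ≤ genBinom p j := genBinom_nonneg (by linarith)
      have e1 : genBinom p k = genBinom p (k - 1) * ((p - ((k : ℝ) - 1)) / ((k : ℝ) - 1 + 1)) := by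
        conv_lhs => rw [show k = (k - 1) + 1 by omega, genBinom_succ, hk1r]
      have e2 : genBinom p (j + 1) = genBinom p j * ((p - j) / ((j : ℝ) + 1)) :=
        genBinom_succ p j
      have hr : 0 ≤ (p - ((k : ℝ) - 1)) / ((k : ℝ) - 1 + 1) := by
        apply div_nonneg _ (by linarith)
        linarith
      have step1 : genBinom p k ≤ genBinom p (j + 1) * ((p - ((k : ℝ) - 1)) / ((k : ℝ) - 1 + 1)) := by
        rw [e1]
        exact mul_le_mul_of_nonneg_right hIH hr
      have scalar : ((p - j) / ((j : ℝ) + 1)) * ((p - ((k : ℝ) - 1)) / ((k : ℝ) - 1 + 1)) ≤ 1 := by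
        rw [div_mul_div_comm, div_le_one (by nlinarith)]
        nlinarith [mul_nonneg (by linarith : (0:ℝ) ≤ (N : ℝ) - p) (by linarith : (0:ℝ) ≤ p - ((N : ℝ) - 1)),
          mul_nonneg (by linarith : (0:ℝ) ≤ (N : ℝ) - p) (by positivity : (0:ℝ) ≤ (N : ℝ))]
      calc genBinom p k ≤ genBinom p (j + 1) * ((p - ((k : ℝ) - 1)) / ((k : ℝ) - 1 + 1)) := step1
        _ = genBinom p j * (((p - j) / ((j : ℝ) + 1)) * ((p - ((k : ℝ) - 1)) / ((k : ℝ) - 1 + 1))) := by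
            rw [e2]; ring
        _ ≤ genBinom p j * 1 := mul_le_mul_of_nonneg_left scalar hCj
        _ = genBinom p j := mul_one _

lemma one_var (p : ℝ) (hp : 3 ≤ p) {x : ℝ} (hx0 : 0 ≤ x) (hx1 : x ≤ 1) :
    (1 + x) ^ p ≤ 1 + x ^ p + ∑ k ∈ Finset.Icc 1 ⌊(p + 1) / 2⌋₊,
      genBinom p k * (x ^ (k : ℝ) + x ^ (p - k)) := by
  set K := ⌊(p + 1) / 2⌋₊ with hK
  set n := ⌊p⌋₊ with hn
  set N := n + 1 with hNdef
  -- basic numeric facts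
  have hn1 : (n : ℝ) ≤ p := Nat.floor_le (by linarith)
  have hn2 : p < (n : ℝ) + 1 := Nat.lt_floor_add_one p
  have hK1 : (K : ℝ) ≤ (p + 1) / 2 := Nat.floor_le (by linarith)
  have hK2 : (p + 1) / 2 < (K : ℝ) + 1 := Nat.lt_floor_add_one _
  have hNr : ((N : ℕ) : ℝ) = (n : ℝ) + 1 := by push_cast [hNdef]; ring
  have hNle : (N : ℝ) ≤ p + 1 := by rw [hNr]; linarith
  have hpleN : p ≤ (N : ℝ) := by rw [hNr]; linarith
  have hKltn : K < n := by
    have : (K : ℝ) < (n : ℝ) := by linarith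
    exact_mod_cast this
  have hN2K : N ≤ 2 * K + 1 := by
    have : (N : ℝ) < 2 * (K : ℝ) + 2 := by rw [hNr]; linarith
    have h2 : N < 2 * K + 2 := by exact_mod_cast this
    omega
  -- Taylor bound
  have h1 := taylor_bound n p hn1 (le_of_lt hn2) x hx0 hx1
  -- split the sum
  have hicc1 : Finset.Ico 0 (K + 1) = Finset.Icc 0 K := by rw [Finset.Ico_add_one_right_eq_Icc]
  have hicc2 : Finset.Ico (K + 1) (n + 2) = Finset.Icc (K + 1) N := by
    ext a; simp only [Finset.mem_Ico, Finset.mem_Icc]; omega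
  have hK1' : 1 ≤ K := by
    have : (1 : ℝ) < (K : ℝ) := by linarith
    exact_mod_cast this.le
  have hicc3 : Finset.Icc 0 K = insert 0 (Finset.Icc 1 K) := by
    ext a; simp only [Finset.mem_Icc, Finset.mem_insert]; omega
  have hsplit : ∑ k ∈ Finset.range (n + 2), genBinom p k * x ^ k
      = (∑ k ∈ Finset.Icc 0 K, genBinom p k * x ^ k)
        + ∑ k ∈ Finset.Icc (K + 1) N, genBinom p k * x ^ k := by
    rw [Finset.range_eq_Ico, ← Finset.sum_Ico_consecutive _ (Nat.zero_le (K + 1)) (by omega),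
      hicc1, hicc2]
  -- termwise bound on the tail
  have htail : ∑ k ∈ Finset.Icc (K + 1) N, genBinom p k * x ^ k
      ≤ ∑ k ∈ Finset.Icc (K + 1) N, genBinom p (N - k) * x ^ (p - ((N - k : ℕ) : ℝ)) := by
    apply Finset.sum_le_sum
    intro k hk
    rw [Finset.mem_Icc] at hk
    obtain ⟨hkK, hkN⟩ := hk
    have hkKr : (K : ℝ) + 1 ≤ (k : ℝ) := by exact_mod_cast hkK
    have hkNr : (k : ℝ) ≤ (N : ℝ) := by exact_mod_cast hkN
    have hNkr : ((N - k : ℕ) : ℝ) = (N : ℝ) - (k : ℝ) := by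
      push_cast [hkN]; ring
    have hcoeff : genBinom p k ≤ genBinom p (N - k) :=
      genBinom_pairing p N hNle hpleN (k - (N - k)) (N - k) k (by omega) (by omega)
    have hz0 : 0 ≤ p - ((N - k : ℕ) : ℝ) := by rw [hNkr]; linarith
    have hzk : p - ((N - k : ℕ) : ℝ) ≤ (k : ℝ) := by rw [hNkr]; linarith
    have hpow : x ^ (k : ℕ) ≤ x ^ (p - ((N - k : ℕ) : ℝ)) := by
      rw [← Real.rpow_natCast x k]
      exact Real.rpow_le_rpow_of_exponent_ge' hx0 hx1 hz0 hzk
    have hCnn : 0 ≤ genBinom p (N - k) := by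
      apply genBinom_nonneg
      rw [hNkr]
      have : (0 : ℝ) ≤ (k : ℝ) := Nat.cast_nonneg k
      linarith
    exact mul_le_mul hcoeff hpow (by positivity) hCnn
  -- reindex the tail
  have hreindex : ∑ k ∈ Finset.Icc (K + 1) N, genBinom p (N - k) * x ^ (p - ((N - k : ℕ) : ℝ))
      = ∑ j ∈ Finset.Icc 0 (N - (K + 1)), genBinom p j * x ^ (p - (j : ℝ)) := by
    apply Finset.sum_nbij' (fun k => N - k) (fun j => N - j)
    · intro a ha; rw [Finset.mem_Icc] at *; omega
    · intro a ha; rw [Finset.mem_Icc] at *; omega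
    · intro a ha; rw [Finset.mem_Icc] at ha; omega
    · intro a ha; rw [Finset.mem_Icc] at ha; omega
    · intro a ha; rfl
  -- extend to Icc 0 K
  have hsubset : ∑ j ∈ Finset.Icc 0 (N - (K + 1)), genBinom p j * x ^ (p - (j : ℝ))
      ≤ ∑ j ∈ Finset.Icc 0 K, genBinom p j * x ^ (p - (j : ℝ)) := by
    apply Finset.sum_le_sum_of_subset_of_nonneg
    · apply Finset.Icc_subset_Icc_right; omega
    · intro j hj _
      rw [Finset.mem_Icc] at hj
      have hjr : (j : ℝ) ≤ (K : ℝ) := by exact_mod_cast hj.2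
      have : 0 ≤ genBinom p j := genBinom_nonneg (by linarith)
      positivity
  -- peel the first terms
  have hhead : ∑ k ∈ Finset.Icc 0 K, genBinom p k * x ^ k
      = 1 + ∑ k ∈ Finset.Icc 1 K, genBinom p k * x ^ k := by
    rw [hicc3, Finset.sum_insert (by simp), genBinom_zero]
    ring
  have hhead2 : ∑ j ∈ Finset.Icc 0 K, genBinom p j * x ^ (p - (j : ℝ))
      = x ^ p + ∑ j ∈ Finset.Icc 1 K, genBinom p j * x ^ (p - (j : ℝ)) := by
    rw [hicc3, Finset.sum_insert (by simp), genBinom_zero]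
    norm_num
  -- combine
  have hmerge : (∑ k ∈ Finset.Icc 1 K, genBinom p k * x ^ k)
      + (∑ j ∈ Finset.Icc 1 K, genBinom p j * x ^ (p - (j : ℝ)))
      = ∑ k ∈ Finset.Icc 1 K, genBinom p k * (x ^ (k : ℝ) + x ^ (p - (k : ℝ))) := by
    rw [← Finset.sum_add_distrib]
    apply Finset.sum_congr rfl
    intro k _
    rw [← Real.rpow_natCast x k]
    ring
  calc (1 + x) ^ p ≤ ∑ k ∈ Finset.range (n + 2), genBinom p k * x ^ k := h1
    _ = (∑ k ∈ Finset.Icc 0 K, genBinom p k * x ^ k)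
        + ∑ k ∈ Finset.Icc (K + 1) N, genBinom p k * x ^ k := hsplit
    _ ≤ (∑ k ∈ Finset.Icc 0 K, genBinom p k * x ^ k)
        + ∑ j ∈ Finset.Icc 0 K, genBinom p j * x ^ (p - (j : ℝ)) := by
        have := htail.trans (le_of_eq hreindex) |>.trans hsubset
        linarith
    _ = 1 + x ^ p + ∑ k ∈ Finset.Icc 1 K, genBinom p k * (x ^ (k : ℝ) + x ^ (p - (k : ℝ))) := by
        rw [hhead, hhead2, ← hmerge]
        ring

lemma two_var_aux (p : ℝ) (hp : 3 ≤ p) {a b : ℝ} (ha : 0 ≤ a) (hb : 0 ≤ b) (hba : b ≤ a) :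
    (a + b) ^ p ≤ a ^ p + b ^ p + ∑ k ∈ Finset.Icc 1 ⌊(p + 1) / 2⌋₊,
      genBinom p k * (a ^ (k : ℝ) * b ^ (p - k) + a ^ (p - k) * b ^ (k : ℝ)) := by
  rcases eq_or_lt_of_le ha with heq | ha'
  · -- a = 0, hence b = 0
    have hb0 : b = 0 := le_antisymm (heq ▸ hba) hb
    rw [← heq, hb0]
    rw [show (0 : ℝ) + 0 = 0 by ring, Real.zero_rpow (by linarith : p ≠ 0)]
    have hsum : ∑ k ∈ Finset.Icc 1 ⌊(p + 1) / 2⌋₊,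
        genBinom p k * ((0:ℝ) ^ (k : ℝ) * (0:ℝ) ^ (p - k) + (0:ℝ) ^ (p - k) * (0:ℝ) ^ (k : ℝ))
        = 0 := by
      apply Finset.sum_eq_zero
      intro k hk
      rw [Finset.mem_Icc] at hk
      have : ((k : ℝ)) ≠ 0 := by
        have : 1 ≤ k := hk.1
        positivity
      rw [Real.zero_rpow this]
      ring
    rw [hsum]
    norm_num
  · -- 0 < a
    set x := b / a with hx
    have hx0 : 0 ≤ x := div_nonneg hb ha
    have hx1 : x ≤ 1 := by rw [hx, div_le_one ha']; exact hba
    have h := one_var p hp hx0 hx1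
    have hkey : ∀ c : ℝ, a ^ p * x ^ c = a ^ (p - c) * b ^ c := by
      intro c
      rw [hx, Real.div_rpow hb ha, Real.rpow_sub ha']
      field_simp
    have hab : a + b = a * (1 + x) := by
      rw [hx]; field_simp
    have hL : (a + b) ^ p = a ^ p * (1 + x) ^ p := by
      rw [hab, Real.mul_rpow ha (by linarith : (0:ℝ) ≤ 1 + x)]
    have hmul := mul_le_mul_of_nonneg_left h (Real.rpow_nonneg ha p)
    rw [hL]
    apply le_trans hmul
    rw [mul_add, mul_add, mul_one, Finset.mul_sum]
    have hb' : a ^ p * x ^ p = b ^ p := by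
      have := hkey p
      rw [this, sub_self, Real.rpow_zero, one_mul]
    rw [hb']
    apply add_le_add_right
    apply le_of_eq
    apply Finset.sum_congr rfl
    intro k _
    have h1 : a ^ p * x ^ ((k : ℕ) : ℝ) = a ^ (p - (k : ℝ)) * b ^ ((k : ℕ) : ℝ) := hkey _
    have h2 : a ^ p * x ^ (p - (k : ℝ)) = a ^ ((k : ℝ)) * b ^ (p - (k : ℝ)) := by
      rw [hkey (p - (k : ℝ)), show p - (p - (k : ℝ)) = (k : ℝ) by ring]
    calc a ^ p * (genBinom p k * (x ^ ((k : ℕ) : ℝ) + x ^ (p - (k : ℝ))))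
        = genBinom p k * (a ^ p * x ^ ((k : ℕ) : ℝ) + a ^ p * x ^ (p - (k : ℝ))) := by ring
      _ = genBinom p k * (a ^ ((k : ℝ)) * b ^ (p - (k : ℝ)) + a ^ (p - (k : ℝ)) * b ^ ((k : ℝ))) := by
          rw [h1, h2]; ring

lemma two_var (p : ℝ) (hp : 3 ≤ p) {a b : ℝ} (ha : 0 ≤ a) (hb : 0 ≤ b) :
    (a + b) ^ p ≤ a ^ p + b ^ p + ∑ k ∈ Finset.Icc 1 ⌊(p + 1) / 2⌋₊,
      genBinom p k * (a ^ (k : ℝ) * b ^ (p - k) + a ^ (p - k) * b ^ (k : ℝ)) := by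
  rcases le_total b a with hba | hab
  · exact two_var_aux p hp ha hb hba
  · have h := two_var_aux p hp hb ha hab
    rw [add_comm b a] at h
    apply h.trans
    apply le_of_eq
    have : ∑ k ∈ Finset.Icc 1 ⌊(p + 1) / 2⌋₊,
        genBinom p k * (b ^ (k : ℝ) * a ^ (p - k) + b ^ (p - k) * a ^ (k : ℝ))
        = ∑ k ∈ Finset.Icc 1 ⌊(p + 1) / 2⌋₊,
        genBinom p k * (a ^ (k : ℝ) * b ^ (p - k) + a ^ (p - k) * b ^ (k : ℝ)) := by
      apply Finset.sum_congr rfl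
      intro k _
      ring
    rw [this]
    ring

set_option maxHeartbeats 1000000 in
/-- **inequality (3.16).** For real `p ≥ 3` (`k_p = ⌊(p+1)/2⌋`),
`X, Y ≥ 0`, `θ ∈ (0,π)`, with `E = X cos²(θ/2) + Y sin²(θ/2)` and
`Ē = X sin²(θ/2) + Y cos²(θ/2)`:
`(E^p + Ē^p - X^p - Y^p)/sin²θ ≤ -(X^p+Y^p)/2 + (1/2) Σ_{k=1}^{k_p} C(p,k)(X^k Y^{p-k} + X^{p-k} Y^k)`. -/
theorem povzner_core_inequality (p : ℝ) (hp : 3 ≤ p) (X Y : ℝ)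
    (hX : 0 ≤ X) (hY : 0 ≤ Y) (θ : ℝ) (hθ : θ ∈ Set.Ioo 0 π) :
    (Real.sin θ ^ 2)⁻¹ *
        ((X * Real.cos (θ / 2) ^ 2 + Y * Real.sin (θ / 2) ^ 2) ^ p
          + (X * Real.sin (θ / 2) ^ 2 + Y * Real.cos (θ / 2) ^ 2) ^ p
          - X ^ p - Y ^ p)
      ≤ -(1 / 2) * (X ^ p + Y ^ p)
        + (1 / 2) * ∑ k ∈ Finset.Icc 1 ⌊(p + 1) / 2⌋₊,
            genBinom p k * (X ^ (k : ℝ) * Y ^ (p - k) + X ^ (p - k) * Y ^ (k : ℝ)) := by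
  obtain ⟨hθ0, hθπ⟩ := hθ
  have hpi := Real.pi_pos
  set c := Real.cos (θ / 2) ^ 2 with hcdef
  set s := Real.sin (θ / 2) ^ 2 with hsdef
  have hcos : 0 < Real.cos (θ / 2) :=
    Real.cos_pos_of_mem_Ioo ⟨by linarith, by linarith⟩
  have hsin : 0 < Real.sin (θ / 2) :=
    Real.sin_pos_of_pos_of_lt_pi (by linarith) (by linarith)
  have hc : 0 < c := by rw [hcdef]; positivity
  have hs : 0 < s := by rw [hsdef]; positivity
  have hcs : c + s = 1 := by
    rw [hcdef, hsdef, add_comm]; exact Real.sin_sq_add_cos_sq (θ / 2)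
  have hc1 : c ≤ 1 := by linarith
  have hs1 : s ≤ 1 := by linarith
  have hsin2 : Real.sin θ ^ 2 = 4 * (c * s) := by
    have h2 : Real.sin θ = 2 * Real.sin (θ / 2) * Real.cos (θ / 2) := by
      conv_lhs => rw [show θ = 2 * (θ / 2) by ring]
      exact Real.sin_two_mul (θ / 2)
    rw [h2, hcdef, hsdef]; ring
  set K := ⌊(p + 1) / 2⌋₊ with hKdef
  have hKle : (K : ℝ) ≤ (p + 1) / 2 := Nat.floor_le (by linarith)
  rw [hsin2, inv_mul_le_iff₀ (by positivity)]
  -- apply the two-variable expansion twice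
  have hE := two_var p hp (a := X * c) (b := Y * s) (by positivity) (by positivity)
  have hF := two_var p hp (a := X * s) (b := Y * c) (by positivity) (by positivity)
  -- expand mixed powers
  have hXc : (X * c) ^ p = X ^ p * c ^ p := Real.mul_rpow hX hc.le
  have hYs : (Y * s) ^ p = Y ^ p * s ^ p := Real.mul_rpow hY hs.le
  have hXs : (X * s) ^ p = X ^ p * s ^ p := Real.mul_rpow hX hs.le
  have hYc : (Y * c) ^ p = Y ^ p * c ^ p := Real.mul_rpow hY hc.le
  -- base part bound
  have hcp : c ^ p ≤ c * c := by
    calc c ^ p ≤ c ^ (2 : ℝ) := Real.rpow_le_rpow_of_exponent_ge hc hc1 (by linarith)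
      _ = c * c := by
        rw [show (2 : ℝ) = ((2 : ℕ) : ℝ) by norm_num, Real.rpow_natCast]; ring
  have hsp : s ^ p ≤ s * s := by
    calc s ^ p ≤ s ^ (2 : ℝ) := Real.rpow_le_rpow_of_exponent_ge hs hs1 (by linarith)
      _ = s * s := by
        rw [show (2 : ℝ) = ((2 : ℕ) : ℝ) by norm_num, Real.rpow_natCast]; ring
  have hXp : 0 ≤ X ^ p := Real.rpow_nonneg hX p
  have hYp : 0 ≤ Y ^ p := Real.rpow_nonneg hY p
  have hps : c ^ p + s ^ p ≤ 1 - 2 * (c * s) := by nlinarith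
  have hbase : X ^ p * c ^ p + Y ^ p * s ^ p + (X ^ p * s ^ p + Y ^ p * c ^ p)
      - X ^ p - Y ^ p ≤ 4 * (c * s) * (-(1 / 2) * (X ^ p + Y ^ p)) := by
    have h1 := mul_le_mul_of_nonneg_left hps hXp
    have h2 := mul_le_mul_of_nonneg_left hps hYp
    nlinarith [h1, h2]
  -- per-term bound for the sums
  have hterm : ∀ k ∈ Finset.Icc 1 K,
      genBinom p k * ((X * c) ^ (k : ℝ) * (Y * s) ^ (p - k)
          + (X * c) ^ (p - k) * (Y * s) ^ (k : ℝ))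
        + genBinom p k * ((X * s) ^ (k : ℝ) * (Y * c) ^ (p - k)
          + (X * s) ^ (p - k) * (Y * c) ^ (k : ℝ))
      ≤ 4 * (c * s) * ((1 / 2) * (genBinom p k
          * (X ^ (k : ℝ) * Y ^ (p - k) + X ^ (p - k) * Y ^ (k : ℝ)))) := by
    intro k hk
    rw [Finset.mem_Icc] at hk
    have hk1 : (1 : ℝ) ≤ (k : ℝ) := by exact_mod_cast hk.1
    have hkK : (k : ℝ) ≤ (K : ℝ) := by exact_mod_cast hk.2
    have hpk1 : (1 : ℝ) ≤ p - (k : ℝ) := by linarith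
    have hC : 0 ≤ genBinom p k := genBinom_nonneg (by linarith)
    have e1 : (X * c) ^ ((k:ℕ) : ℝ) = X ^ ((k:ℕ) : ℝ) * c ^ ((k:ℕ) : ℝ) := Real.mul_rpow hX hc.le
    have e2 : (Y * s) ^ (p - (k : ℝ)) = Y ^ (p - (k : ℝ)) * s ^ (p - (k : ℝ)) :=
      Real.mul_rpow hY hs.le
    have e3 : (X * c) ^ (p - (k : ℝ)) = X ^ (p - (k : ℝ)) * c ^ (p - (k : ℝ)) :=
      Real.mul_rpow hX hc.le
    have e4 : (Y * s) ^ ((k:ℕ) : ℝ) = Y ^ ((k:ℕ) : ℝ) * s ^ ((k:ℕ) : ℝ) := Real.mul_rpow hY hs.le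
    have e5 : (X * s) ^ ((k:ℕ) : ℝ) = X ^ ((k:ℕ) : ℝ) * s ^ ((k:ℕ) : ℝ) := Real.mul_rpow hX hs.le
    have e6 : (Y * c) ^ (p - (k : ℝ)) = Y ^ (p - (k : ℝ)) * c ^ (p - (k : ℝ)) :=
      Real.mul_rpow hY hc.le
    have e7 : (X * s) ^ (p - (k : ℝ)) = X ^ (p - (k : ℝ)) * s ^ (p - (k : ℝ)) :=
      Real.mul_rpow hX hs.le
    have e8 : (Y * c) ^ ((k:ℕ) : ℝ) = Y ^ ((k:ℕ) : ℝ) * c ^ ((k:ℕ) : ℝ) := Real.mul_rpow hY hc.le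
    have hck : c ^ (k : ℝ) ≤ c := by
      calc c ^ (k : ℝ) ≤ c ^ (1 : ℝ) := Real.rpow_le_rpow_of_exponent_ge hc hc1 hk1
        _ = c := Real.rpow_one c
    have hsk : s ^ (k : ℝ) ≤ s := by
      calc s ^ (k : ℝ) ≤ s ^ (1 : ℝ) := Real.rpow_le_rpow_of_exponent_ge hs hs1 hk1
        _ = s := Real.rpow_one s
    have hcpk : c ^ (p - (k : ℝ)) ≤ c := by
      calc c ^ (p - (k : ℝ)) ≤ c ^ (1 : ℝ) := Real.rpow_le_rpow_of_exponent_ge hc hc1 hpk1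
        _ = c := Real.rpow_one c
    have hspk : s ^ (p - (k : ℝ)) ≤ s := by
      calc s ^ (p - (k : ℝ)) ≤ s ^ (1 : ℝ) := Real.rpow_le_rpow_of_exponent_ge hs hs1 hpk1
        _ = s := Real.rpow_one s
    have hfac : c ^ (k : ℝ) * s ^ (p - (k : ℝ)) + c ^ (p - (k : ℝ)) * s ^ (k : ℝ)
        ≤ 2 * (c * s) := by
      have t1 : c ^ (k : ℝ) * s ^ (p - (k : ℝ)) ≤ c * s :=
        mul_le_mul hck hspk (Real.rpow_nonneg hs.le _) hc.le
      have t2 : c ^ (p - (k : ℝ)) * s ^ (k : ℝ) ≤ c * s :=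
        mul_le_mul hcpk hsk (Real.rpow_nonneg hs.le _) hc.le
      linarith
    have hAB : 0 ≤ X ^ (k : ℝ) * Y ^ (p - (k : ℝ)) + X ^ (p - (k : ℝ)) * Y ^ (k : ℝ) := by
      have h1 := Real.rpow_nonneg hX ((k:ℕ) : ℝ)
      have h2 := Real.rpow_nonneg hY (p - (k : ℝ))
      have h3 := Real.rpow_nonneg hX (p - (k : ℝ))
      have h4 := Real.rpow_nonneg hY ((k:ℕ) : ℝ)
      positivity
    have hmain : (genBinom p k * (X ^ (k : ℝ) * Y ^ (p - (k : ℝ)) + X ^ (p - (k : ℝ)) * Y ^ (k : ℝ)))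
          * (c ^ (k : ℝ) * s ^ (p - (k : ℝ)) + c ^ (p - (k : ℝ)) * s ^ (k : ℝ))
        ≤ (genBinom p k * (X ^ (k : ℝ) * Y ^ (p - (k : ℝ)) + X ^ (p - (k : ℝ)) * Y ^ (k : ℝ)))
          * (2 * (c * s)) :=
      mul_le_mul_of_nonneg_left hfac (mul_nonneg hC hAB)
    calc genBinom p k * ((X * c) ^ (k : ℝ) * (Y * s) ^ (p - k)
            + (X * c) ^ (p - k) * (Y * s) ^ (k : ℝ))
          + genBinom p k * ((X * s) ^ (k : ℝ) * (Y * c) ^ (p - k)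
            + (X * s) ^ (p - k) * (Y * c) ^ (k : ℝ))
        = (genBinom p k * (X ^ (k : ℝ) * Y ^ (p - (k : ℝ)) + X ^ (p - (k : ℝ)) * Y ^ (k : ℝ)))
            * (c ^ (k : ℝ) * s ^ (p - (k : ℝ)) + c ^ (p - (k : ℝ)) * s ^ (k : ℝ)) := by
          rw [e1, e2, e3, e4, e5, e6, e7, e8]; ring
      _ ≤ (genBinom p k * (X ^ (k : ℝ) * Y ^ (p - (k : ℝ)) + X ^ (p - (k : ℝ)) * Y ^ (k : ℝ)))
            * (2 * (c * s)) := hmain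
      _ = 4 * (c * s) * ((1 / 2) * (genBinom p k
            * (X ^ (k : ℝ) * Y ^ (p - (k : ℝ)) + X ^ (p - (k : ℝ)) * Y ^ (k : ℝ)))) := by ring
  -- sum the per-term bounds
  have hsum : (∑ k ∈ Finset.Icc 1 K, genBinom p k * ((X * c) ^ (k : ℝ) * (Y * s) ^ (p - k)
          + (X * c) ^ (p - k) * (Y * s) ^ (k : ℝ)))
      + (∑ k ∈ Finset.Icc 1 K, genBinom p k * ((X * s) ^ (k : ℝ) * (Y * c) ^ (p - k)
          + (X * s) ^ (p - k) * (Y * c) ^ (k : ℝ)))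
      ≤ 4 * (c * s) * ((1 / 2) * ∑ k ∈ Finset.Icc 1 K,
          genBinom p k * (X ^ (k : ℝ) * Y ^ (p - k) + X ^ (p - k) * Y ^ (k : ℝ))) := by
    rw [← Finset.sum_add_distrib]
    calc ∑ k ∈ Finset.Icc 1 K, (genBinom p k * ((X * c) ^ (k : ℝ) * (Y * s) ^ (p - k)
            + (X * c) ^ (p - k) * (Y * s) ^ (k : ℝ))
          + genBinom p k * ((X * s) ^ (k : ℝ) * (Y * c) ^ (p - k)
            + (X * s) ^ (p - k) * (Y * c) ^ (k : ℝ)))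
        ≤ ∑ k ∈ Finset.Icc 1 K, 4 * (c * s) * ((1 / 2) * (genBinom p k
            * (X ^ (k : ℝ) * Y ^ (p - k) + X ^ (p - k) * Y ^ (k : ℝ)))) :=
          Finset.sum_le_sum hterm
      _ = _ := by rw [Finset.mul_sum, Finset.mul_sum]
  -- conclude
  rw [mul_add]
  rw [hXc, hYs] at hE
  rw [hXs, hYc] at hF
  linarith [hE, hF, hbase, hsum]
end

section
/- Let A > 0, B > 0, ε > 0 and define Y(t) := ( A / ( B (1 − e^{−εAt}) ) )^{1/ε} for t > 0. Let u : (0,∞) → [0,∞) and suppose there exists a locally integrable function g on (0,∞) such that u(t₂) − u(t₁) = ∫_{t₁}^{t₂} g(s) ds for all 0 < t₁ ≤ t₂ < ∞, and such that for almost every t ∈ (0,∞) with u(t) > Y(t) one has g(t) ≤ A u(t) − B u(t)^{1+ε}. Then u(t) ≤ Y(t) for all t ∈ (0,∞). -/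
open Real MeasureTheory intervalIntegral



section OdeAux
open Filter Set


lemma odeAux_m_pos {A ε : ℝ} (hA : 0 < A) (hε : 0 < ε) {t : ℝ} (ht : 0 < t) :
    0 < 1 - Real.exp (-(ε * A * t)) := by
  have : Real.exp (-(ε * A * t)) < 1 := by
    rw [Real.exp_lt_one_iff]; nlinarith [mul_pos (mul_pos hε hA) ht]
  linarith

lemma odeAux_c_pos {A B ε : ℝ} (hA : 0 < A) (hB : 0 < B) (hε : 0 < ε) {t : ℝ} (ht : 0 < t) :
    0 < A / (B * (1 - Real.exp (-(ε * A * t)))) :=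
  div_pos hA (mul_pos hB (odeAux_m_pos hA hε ht))

lemma odeAux_Y_pos {A B ε : ℝ} (hA : 0 < A) (hB : 0 < B) (hε : 0 < ε) {t : ℝ} (ht : 0 < t) :
    0 < (A / (B * (1 - Real.exp (-(ε * A * t))))) ^ (1 / ε) :=
  Real.rpow_pos_of_pos (odeAux_c_pos hA hB hε ht) _

lemma odeAux_Y_anti {A B ε : ℝ} (hA : 0 < A) (hB : 0 < B) (hε : 0 < ε) {s t : ℝ}
    (hs : 0 < s) (hst : s < t) :
    (A / (B * (1 - Real.exp (-(ε * A * t))))) ^ (1 / ε)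
      < (A / (B * (1 - Real.exp (-(ε * A * s))))) ^ (1 / ε) := by
  have ht : 0 < t := hs.trans hst
  apply Real.rpow_lt_rpow (odeAux_c_pos hA hB hε ht).le _ (by positivity)
  apply div_lt_div_of_pos_left hA (mul_pos hB (odeAux_m_pos hA hε hs))
  have : Real.exp (-(ε * A * t)) < Real.exp (-(ε * A * s)) := by
    apply Real.exp_lt_exp.2; nlinarith [mul_pos hε hA]
  nlinarith [hB]

lemma odeAux_hasDerivAt_Y {A B ε : ℝ} (hA : 0 < A) (hB : 0 < B) (hε : 0 < ε) {t : ℝ} (ht : 0 < t) :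
    HasDerivAt (fun s => (A / (B * (1 - Real.exp (-(ε * A * s))))) ^ (1 / ε))
      (A * (A / (B * (1 - Real.exp (-(ε * A * t))))) ^ (1 / ε)
        - B * ((A / (B * (1 - Real.exp (-(ε * A * t))))) ^ (1 / ε)) ^ (1 + ε)) t := by
  have hm0 : 0 < 1 - Real.exp (-(ε * A * t)) := odeAux_m_pos hA hε ht
  have hc : 0 < A / (B * (1 - Real.exp (-(ε * A * t)))) := odeAux_c_pos hA hB hε ht
  have hlin : HasDerivAt (fun s : ℝ => -(ε * A * s)) (-(ε * A)) t := by
    simpa [Pi.neg_def] using ((hasDerivAt_id t).const_mul (ε * A)).neg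
  have hexp : HasDerivAt (fun s : ℝ => Real.exp (-(ε * A * s)))
      (Real.exp (-(ε * A * t)) * (-(ε * A))) t := hlin.exp
  have hm : HasDerivAt (fun s : ℝ => B * (1 - Real.exp (-(ε * A * s))))
      (B * (ε * A * Real.exp (-(ε * A * t)))) t := by
    have : HasDerivAt (fun s : ℝ => 1 - Real.exp (-(ε * A * s)))
        (ε * A * Real.exp (-(ε * A * t))) t := by
      simpa [mul_comm] using (hexp.const_sub 1)
    exact this.const_mul B
  have hcd : HasDerivAt (fun s : ℝ => A / (B * (1 - Real.exp (-(ε * A * s)))))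
      ((0 * (B * (1 - Real.exp (-(ε * A * t)))) - A * (B * (ε * A * Real.exp (-(ε * A * t)))))
        / (B * (1 - Real.exp (-(ε * A * t)))) ^ 2) t :=
    (hasDerivAt_const t A).div hm (by positivity)
  have hY := hcd.rpow_const (p := 1 / ε) (Or.inl (ne_of_gt hc))
  convert hY using 1
  set E := Real.exp (-(ε * A * t)) with hEdef
  set m := 1 - E with hmdef
  set c := A / (B * m) with hcdef
  have h1 : c ^ (1 / ε - 1) = c ^ (1 / ε) / c := by
    rw [Real.rpow_sub hc, Real.rpow_one]
  have h2 : (c ^ (1 / ε)) ^ (1 + ε) = c ^ (1 / ε) * c := by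
    rw [← Real.rpow_mul hc.le]
    have he : 1 / ε * (1 + ε) = 1 / ε + 1 := by field_simp
    rw [he, Real.rpow_add hc, Real.rpow_one]
  rw [h1, h2]
  have hE : E = 1 - m := by rw [hmdef]; ring
  rw [hE, hcdef]
  field_simp
  ring

lemma odeAux_tendsto_atTop {A B ε : ℝ} (hA : 0 < A) (hB : 0 < B) (hε : 0 < ε) :
    Tendsto (fun s => (A / (B * (1 - Real.exp (-(ε * A * s))))) ^ (1 / ε))
      (nhdsWithin 0 (Ioi 0)) atTop := by
  have hm : Tendsto (fun s : ℝ => B * (1 - Real.exp (-(ε * A * s))))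
      (nhdsWithin 0 (Ioi 0)) (nhdsWithin 0 (Ioi 0)) := by
    apply tendsto_nhdsWithin_of_tendsto_nhds_of_eventually_within
    · have : Continuous (fun s : ℝ => B * (1 - Real.exp (-(ε * A * s)))) := by continuity
      exact (this.tendsto' 0 0 (by simp)).mono_left nhdsWithin_le_nhds
    · filter_upwards [self_mem_nhdsWithin] with s hs
      exact mul_pos hB (odeAux_m_pos hA hε hs)
  have hinv : Tendsto (fun s : ℝ => A * (B * (1 - Real.exp (-(ε * A * s))))⁻¹)
      (nhdsWithin 0 (Ioi 0)) atTop :=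
    (tendsto_inv_nhdsGT_zero.comp hm).const_mul_atTop hA
  have := (tendsto_rpow_atTop (one_div_pos.mpr hε)).comp hinv
  simpa [div_eq_mul_inv, Function.comp_def] using this

lemma odeAux_contY {A B ε : ℝ} (hA : 0 < A) (hB : 0 < B) (hε : 0 < ε) {t : ℝ} (ht : 0 < t) :
    ContinuousAt (fun s => (A / (B * (1 - Real.exp (-(ε * A * s))))) ^ (1 / ε)) t := by
  have h1 : ContinuousAt (fun s : ℝ => A / (B * (1 - Real.exp (-(ε * A * s))))) t := by
    apply ContinuousAt.div continuousAt_const (by fun_prop)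
    have := odeAux_m_pos hA hε ht; positivity
  exact (Real.continuousAt_rpow_const _ _ (Or.inr (by positivity))).comp h1


lemma odeAux_contu (u g : ℝ → ℝ)
    (hgint : ∀ t₁ t₂ : ℝ, 0 < t₁ → t₁ ≤ t₂ → IntervalIntegrable g volume t₁ t₂)
    (hftc : ∀ t₁ t₂ : ℝ, 0 < t₁ → t₁ ≤ t₂ → u t₂ - u t₁ = ∫ s in t₁..t₂, g s)
    {b : ℝ} (hb : 0 < b) : ContinuousAt u b := by
  have ha : 0 < b / 2 := by positivity
  have hab : b / 2 < b := by linarith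
  have hint : IntervalIntegrable g volume (b / 2) (b + 1) := hgint _ _ ha (by linarith)
  have hcont : ContinuousOn (fun x => ∫ s in (b/2)..x, g s) (uIcc (b/2) (b+1)) := by
    apply intervalIntegral.continuousOn_primitive_interval
    rw [uIcc_of_le (by linarith), integrableOn_Icc_iff_integrableOn_Ioc]
    exact hint.1
  have heq : ∀ x ∈ Ioo (b/2) (b+1), u x = u (b/2) + ∫ s in (b/2)..x, g s := by
    intro x hx
    have := hftc (b/2) x ha hx.1.le
    linarith
  have hco : ContinuousOn u (Ioo (b/2) (b+1)) := by
    apply ContinuousOn.congr (f := fun x => u (b/2) + ∫ s in (b/2)..x, g s)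
    · refine continuousOn_const.add (hcont.mono ?_)
      rw [uIcc_of_le (by linarith)]
      exact Ioo_subset_Icc_self
    · exact fun x hx => heq x hx
  exact hco.continuousAt (Ioo_mem_nhds hab (by linarith))
end OdeAux


open Filter Set in
/-- **Lemma 3.7 (II), ODE comparison.** Let `A, B, ε > 0` and
`Y(t) = (A/(B(1-e^{-εAt})))^{1/ε}` for `t > 0`. If `u : (0,∞) → [0,∞)` is absolutely
continuous on compact subintervals of `(0,∞)` with a.e. derivative `g` satisfying
`g(t) ≤ A u(t) - B u(t)^{1+ε}` for a.e. `t` with `u(t) > Y(t)`, then `u ≤ Y` on `(0,∞)`. -/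
theorem ode_comparison (A B ε : ℝ) (hA : 0 < A) (hB : 0 < B) (hε : 0 < ε)
    (u g : ℝ → ℝ) (hu0 : ∀ t : ℝ, 0 < t → 0 ≤ u t)
    (hgint : ∀ t₁ t₂ : ℝ, 0 < t₁ → t₁ ≤ t₂ → IntervalIntegrable g volume t₁ t₂)
    (hftc : ∀ t₁ t₂ : ℝ, 0 < t₁ → t₁ ≤ t₂ → u t₂ - u t₁ = ∫ s in t₁..t₂, g s)
    (hode : ∀ᵐ t : ℝ ∂volume, 0 < t →
      (A / (B * (1 - Real.exp (-(ε * A * t))))) ^ (1 / ε) < u t →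
      g t ≤ A * u t - B * u t ^ (1 + ε)) :
    ∀ t : ℝ, 0 < t → u t ≤ (A / (B * (1 - Real.exp (-(ε * A * t))))) ^ (1 / ε) := by
  set Y : ℝ → ℝ := fun s => (A / (B * (1 - Real.exp (-(ε * A * s))))) ^ (1 / ε) with hYdef
  intro t₀ ht₀
  suffices hmain : ∀ δ : ℝ, 0 < δ → δ < t₀ → u t₀ ≤ Y (t₀ - δ) by
    have htt : Tendsto (fun δ => Y (t₀ - δ)) (nhdsWithin 0 (Ioi 0)) (nhds (Y t₀)) := by
      have hsub : Tendsto (fun δ : ℝ => t₀ - δ) (nhdsWithin 0 (Ioi 0)) (nhds t₀) :=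
        ((continuous_const.sub continuous_id).tendsto' 0 t₀ (by simp)).mono_left
          nhdsWithin_le_nhds
      exact (odeAux_contY hA hB hε ht₀).tendsto.comp hsub
    refine ge_of_tendsto htt ?_
    filter_upwards [Ioo_mem_nhdsGT_of_mem ⟨le_refl (0:ℝ), ht₀⟩] with δ hδ
    exact hmain δ hδ.1 hδ.2
  intro δ hδ hδt
  by_contra hcon
  push_neg at hcon
  -- find a starting point a₀ just above δ where u < Y(· - δ)
  have h1 : ∀ᶠ s in nhdsWithin δ (Ioi δ), u s < u δ + 1 :=
    ((odeAux_contu u g hgint hftc hδ).tendsto.eventually_lt_const (by linarith)).filter_mono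
      nhdsWithin_le_nhds
  have hshift : Tendsto (fun s : ℝ => s - δ) (nhdsWithin δ (Ioi δ)) (nhdsWithin 0 (Ioi 0)) := by
    apply tendsto_nhdsWithin_of_tendsto_nhds_of_eventually_within
    · exact ((continuous_id.sub continuous_const).tendsto' δ 0 (by simp)).mono_left
        nhdsWithin_le_nhds
    · filter_upwards [self_mem_nhdsWithin] with s hs
      simpa [sub_pos] using hs
  have h2 : ∀ᶠ s in nhdsWithin δ (Ioi δ), u δ + 1 < Y (s - δ) :=
    ((odeAux_tendsto_atTop hA hB hε).comp hshift).eventually_gt_atTop (u δ + 1)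
  have h3 : Ioo δ t₀ ∈ nhdsWithin δ (Ioi δ) := Ioo_mem_nhdsGT_of_mem ⟨le_refl δ, hδt⟩
  obtain ⟨a₀, ha₀u, ha₀Y, ha₀mem⟩ := (h1.and (h2.and (eventually_mem_set.2 h3))).exists
  have ha₀ : u a₀ < Y (a₀ - δ) := by linarith
  -- continuity facts
  have hYδcont : ∀ s : ℝ, δ < s → ContinuousAt (fun x => Y (x - δ)) s := by
    intro s hs
    exact ContinuousAt.comp (g := Y) (f := fun x : ℝ => x - δ)
      (odeAux_contY hA hB hε (by linarith : (0:ℝ) < s - δ))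
      ((continuous_sub_right δ).continuousAt)
  have hucont : ∀ s : ℝ, 0 < s → ContinuousAt u s := fun s hs => odeAux_contu u g hgint hftc hs
  -- the set S and its sup
  set S : Set ℝ := {s | s ∈ Icc a₀ t₀ ∧ u s ≤ Y (s - δ)} with hSdef
  have hScl : IsClosed S := by
    have hcs : ContinuousOn (fun s => u s - Y (s - δ)) (Icc a₀ t₀) := by
      intro s hs
      exact (((hucont s (by linarith [hs.1, ha₀mem.1])).sub
        (hYδcont s (by linarith [hs.1, ha₀mem.1])))).continuousWithinAt
    have : S = Icc a₀ t₀ ∩ (fun s => u s - Y (s - δ)) ⁻¹' Iic 0 := by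
      ext s
      simp only [hSdef, mem_setOf_eq, mem_inter_iff, mem_preimage, mem_Iic, sub_nonpos]
    rw [this]
    exact hcs.preimage_isClosed_of_isClosed isClosed_Icc isClosed_Iic
  have hScpt : IsCompact S := isCompact_Icc.of_isClosed_subset hScl (fun s hs => hs.1)
  have hSne : S.Nonempty := ⟨a₀, ⟨le_refl a₀, ha₀mem.2.le⟩, ha₀.le⟩
  set t₁ := sSup S with ht₁def
  have ht₁S : t₁ ∈ S := hScpt.sSup_mem hSne
  have ht₁a₀ : a₀ ≤ t₁ := ht₁S.1.1
  have ht₁t₀ : t₁ ≤ t₀ := ht₁S.1.2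
  have hδt₁ : δ < t₁ := lt_of_lt_of_le ha₀mem.1 ht₁a₀
  have ht₁pos : 0 < t₁ := hδ.trans hδt₁
  have ht₁lt : t₁ < t₀ := lt_of_le_of_ne ht₁t₀ (by
    intro h; rw [h] at ht₁S; exact absurd ht₁S.2 (not_le.2 hcon))
  have hgt : ∀ s : ℝ, t₁ < s → s ≤ t₀ → Y (s - δ) < u s := by
    intro s hs1 hs2
    by_contra hle
    push_neg at hle
    have : s ∈ S := ⟨⟨ht₁a₀.trans hs1.le, hs2⟩, hle⟩
    exact absurd (le_csSup hScpt.bddAbove this) (not_le.2 hs1)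
  -- the analytic core
  set h : ℝ → ℝ := fun s => u s - Y (s - δ) with hhdef
  set G : ℝ → ℝ := fun b => ∫ s in t₁..b, h s with hGdef
  have hIoisub : Ioi δ ⊆ Ioi (0:ℝ) := fun x hx => hδ.trans hx
  have hhcontOn : ContinuousOn h (Ioi δ) := fun s hs =>
    ((hucont s (hIoisub hs)).sub (hYδcont s hs)).continuousWithinAt
  have hIccsub : Icc t₁ t₀ ⊆ Ioi δ := fun x hx => lt_of_lt_of_le hδt₁ hx.1
  have hhint : ∀ b ∈ Icc t₁ t₀, IntervalIntegrable h volume t₁ b := by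
    intro b hb
    apply ContinuousOn.intervalIntegrable
    rw [uIcc_of_le hb.1]
    exact hhcontOn.mono (Icc_subset_Icc_right hb.2 |>.trans hIccsub)
  set f₁ : ℝ → ℝ := fun s => A * u s - B * u s ^ (1 + ε) with hf₁def
  set f₂ : ℝ → ℝ := fun s => A * Y (s - δ) - B * Y (s - δ) ^ (1 + ε) with hf₂def
  have hf₁cont : ContinuousOn f₁ (Ioi δ) := by
    intro s hs
    have hu := hucont s (hIoisub hs)
    have hpow : ContinuousAt (fun x => u x ^ (1 + ε)) s :=
      hu.rpow_const (Or.inr (by positivity))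
    exact ((continuousAt_const.mul hu).sub (continuousAt_const.mul hpow)).continuousWithinAt
  have hf₂cont : ContinuousOn f₂ (Ioi δ) := by
    intro s hs
    have hy := hYδcont s hs
    have hpow : ContinuousAt (fun x => Y (x - δ) ^ (1 + ε)) s :=
      hy.rpow_const (Or.inr (by positivity))
    exact ((continuousAt_const.mul hy).sub (continuousAt_const.mul hpow)).continuousWithinAt
  have hne : ∀ᵐ x : ℝ ∂volume, x ≠ t₁ := by
    have : (volume : Measure ℝ) {t₁} = 0 := Real.volume_singleton
    simpa [ae_iff] using this
  have claim1 : ∀ b ∈ Icc t₁ t₀, h b ≤ A * G b := by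
    intro b hb
    obtain ⟨hb1, hb2⟩ := hb
    have huIcc : uIcc t₁ b = Icc t₁ b := uIcc_of_le hb1
    have hsubb : Icc t₁ b ⊆ Ioi δ := (Icc_subset_Icc_right hb2).trans hIccsub
    have hint_g : IntervalIntegrable g volume t₁ b := hgint t₁ b ht₁pos hb1
    have hint_f₁ : IntervalIntegrable f₁ volume t₁ b :=
      (hf₁cont.mono (huIcc ▸ hsubb)).intervalIntegrable
    have hint_f₂ : IntervalIntegrable f₂ volume t₁ b :=
      (hf₂cont.mono (huIcc ▸ hsubb)).intervalIntegrable
    have hint_h : IntervalIntegrable h volume t₁ b := hhint b ⟨hb1, hb2⟩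
    have hYeq : (∫ s in t₁..b, f₂ s) = Y (b - δ) - Y (t₁ - δ) := by
      apply intervalIntegral.integral_eq_sub_of_hasDerivAt _ hint_f₂
      intro x hx
      rw [huIcc] at hx
      have hxδ : (0:ℝ) < x - δ := by have := hsubb hx; simpa [sub_pos] using this
      have h0 : HasDerivAt (fun s : ℝ => s - δ) 1 x := (hasDerivAt_id x).sub_const δ
      have := (odeAux_hasDerivAt_Y hA hB hε hxδ).comp x h0
      simpa [hYdef, hf₂def, Function.comp_def] using this
    have hae1 : g ≤ᶠ[ae (volume.restrict (Icc t₁ b))] f₁ := by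
      apply (ae_restrict_iff' measurableSet_Icc).mpr
      filter_upwards [hode, hne] with x hx hxne hxmem
      have hxt₁ : t₁ < x := lt_of_le_of_ne hxmem.1 (Ne.symm hxne)
      have hx0 : 0 < x := ht₁pos.trans hxt₁
      have hYx : Y x < u x :=
        lt_trans (odeAux_Y_anti hA hB hε (by linarith [hsubb hxmem] : (0:ℝ) < x - δ)
          (by linarith)) (hgt x hxt₁ (hxmem.2.trans hb2))
      exact hx hx0 hYx
    have est1 : (∫ s in t₁..b, g s) ≤ ∫ s in t₁..b, f₁ s :=
      intervalIntegral.integral_mono_ae_restrict hb1 hint_g hint_f₁ hae1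
    have hae2 : (fun s => f₁ s - f₂ s) ≤ᶠ[ae (volume.restrict (Icc t₁ b))]
        (fun s => A * h s) := by
      apply (ae_restrict_iff' measurableSet_Icc).mpr
      filter_upwards [hne] with x hxne hxmem
      have hxt₁ : t₁ < x := lt_of_le_of_ne hxmem.1 (Ne.symm hxne)
      have hxδ : (0:ℝ) < x - δ := by have := hsubb hxmem; simpa [sub_pos] using this
      have hYu : Y (x - δ) ≤ u x := (hgt x hxt₁ (hxmem.2.trans hb2)).le
      have hYpos : 0 ≤ Y (x - δ) := (odeAux_Y_pos hA hB hε hxδ).le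
      have hrp : Y (x - δ) ^ (1 + ε) ≤ u x ^ (1 + ε) :=
        Real.rpow_le_rpow hYpos hYu (by positivity)
      simp only [hf₁def, hf₂def, hhdef]
      nlinarith [hB]
    have est2 : (∫ s in t₁..b, (f₁ s - f₂ s)) ≤ ∫ s in t₁..b, A * h s :=
      intervalIntegral.integral_mono_ae_restrict hb1 (hint_f₁.sub hint_f₂)
        (hint_h.const_mul A) hae2
    have hsplit : (∫ s in t₁..b, (f₁ s - f₂ s))
        = (∫ s in t₁..b, f₁ s) - ∫ s in t₁..b, f₂ s :=
      intervalIntegral.integral_sub hint_f₁ hint_f₂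
    have hconst : (∫ s in t₁..b, A * h s) = A * ∫ s in t₁..b, h s :=
      intervalIntegral.integral_const_mul A h
    have hueq := hftc t₁ b ht₁pos hb1
    have hht₁ : h t₁ ≤ 0 := sub_nonpos.2 ht₁S.2
    have hhb : h b = u b - Y (b - δ) := rfl
    have hht₁' : h t₁ = u t₁ - Y (t₁ - δ) := rfl
    have hGb : G b = ∫ s in t₁..b, h s := rfl
    linarith
  -- derivative of G and the exponential trick
  have hG' : ∀ b ∈ Icc t₁ t₀, HasDerivAt G (h b) b := by
    intro b hb
    exact intervalIntegral.integral_hasDerivAt_right (hhint b hb)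
      (hhcontOn.stronglyMeasurableAtFilter isOpen_Ioi b (hIccsub hb))
      (hhcontOn.continuousAt (isOpen_Ioi.mem_nhds (hIccsub hb)))
  set K : ℝ → ℝ := fun b => Real.exp (-(A * b)) * G b with hKdef
  have hK' : ∀ b ∈ Icc t₁ t₀,
      HasDerivAt K (Real.exp (-(A * b)) * (-A) * G b + Real.exp (-(A * b)) * h b) b := by
    intro b hb
    have hlin : HasDerivAt (fun b : ℝ => -(A * b)) (-A) b := by
      simpa [Pi.neg_def] using ((hasDerivAt_id b).const_mul A).neg
    have he : HasDerivAt (fun b : ℝ => Real.exp (-(A * b))) (Real.exp (-(A * b)) * (-A)) b :=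
      hlin.exp
    exact he.mul (hG' b hb)
  have hanti : AntitoneOn K (Icc t₁ t₀) := by
    apply antitoneOn_of_deriv_nonpos (convex_Icc t₁ t₀)
    · exact fun b hb => (hK' b hb).continuousAt.continuousWithinAt
    · intro b hb
      rw [interior_Icc] at hb
      exact (hK' b (Ioo_subset_Icc_self hb)).differentiableAt.differentiableWithinAt
    · intro b hb
      rw [interior_Icc] at hb
      have hbIcc : b ∈ Icc t₁ t₀ := Ioo_subset_Icc_self hb
      rw [(hK' b hbIcc).deriv]
      have h1 := claim1 b hbIcc
      have h2 := Real.exp_pos (-(A * b))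
      nlinarith
  have hmemt₁ : t₁ ∈ Icc t₁ t₀ := ⟨le_refl t₁, ht₁t₀⟩
  have hmemt₀ : t₀ ∈ Icc t₁ t₀ := ⟨ht₁t₀, le_refl t₀⟩
  have hKle : K t₀ ≤ K t₁ := hanti hmemt₁ hmemt₀ ht₁t₀
  have hKt₁ : K t₁ = 0 := by
    simp [hKdef, hGdef, intervalIntegral.integral_same]
  have hGt₀ : G t₀ ≤ 0 := by
    have h2 := Real.exp_pos (-(A * t₀))
    rw [hKt₁] at hKle
    have hKt₀ : K t₀ = Real.exp (-(A * t₀)) * G t₀ := rfl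
    by_contra hpos
    push_neg at hpos
    nlinarith
  have hfinal := claim1 t₀ hmemt₀
  have hht₀ : h t₀ = u t₀ - Y (t₀ - δ) := rfl
  nlinarith
end
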